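/- arXiv:1312.7170 — 4 statements merged into one kernel-verified Lean document; each statement's English description precedes it below -/
import Mathlib

section
/- Every connected geometric graph in the plane has a spanning tree of maximum degree at most five. -/
open Complex

private lemma reconj (z w : ℂ) :
    (z * (starRingEnd ℂ) w).re = ‖z‖ * ‖w‖ * Real.cos (arg z - arg w) := by
  have hzc := norm_mul_cos_arg z
  have hzs := norm_mul_sin_arg z
  have hwc := norm_mul_cos_arg w
  have hws := norm_mul_sin_arg w
  rw [Real.cos_sub]
  simp only [Complex.mul_re, Complex.conj_re, Complex.conj_im]
  linear_combination (-w.re) * hzc + (-w.im) * hzs +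
    (-(‖z‖ * Real.cos (arg z))) * hwc + (-(‖z‖ * Real.sin (arg z))) * hws

private lemma resymm (z w : ℂ) : (z * (starRingEnd ℂ) w).re = (w * (starRingEnd ℂ) z).re := by
  simp only [Complex.mul_re, Complex.conj_re, Complex.conj_im]; ring

private lemma sqabs_sub (z w : ℂ) :
    (‖z - w‖)^2 = (‖z‖)^2 + (‖w‖)^2
      - 2 * (z * (starRingEnd ℂ) w).re := by
  rw [Complex.sq_norm, Complex.sq_norm, Complex.sq_norm, Complex.normSq_sub]

private lemma ortho (a b : ℂ)
    (h1 : a.re^2 + a.im^2 = (‖a‖)^2) (h2 : b.re^2 + b.im^2 = (‖b‖)^2)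
    (hp : 0 < ‖a‖) (hq : 0 < ‖b‖)
    (hab : (a * (starRingEnd ℂ) b).re = -(‖a‖ * ‖b‖))
    (hA : 0 ≤ a.re) (hC : 0 ≤ b.re) : a.re = 0 := by
  set A := a.re; set B := a.im; set C := b.re; set D := b.im
  set p := ‖a‖; set q := ‖b‖
  have h3 : A * C + B * D = -(p*q) := by
    have := hab
    simp only [Complex.mul_re, Complex.conj_re, Complex.conj_im] at this
    linarith [this]
  have key : (A*D - B*C)^2 = 0 := by
    linear_combination (C^2+D^2) * h1 + p^2 * h2 + (p*q - A*C - B*D) * h3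
  have hADBC : A*D = B*C := by
    have := sq_eq_zero_iff.mp key
    linarith [this]
  have hCp : C*p^2 + A*(p*q) = 0 := by
    linear_combination A * h3 - B * hADBC - C * h1
  have hfac : (C*p + A*q) * p = 0 := by linear_combination hCp
  have h5 : C*p + A*q = 0 := by
    rcases mul_eq_zero.mp hfac with h | h
    · exact h
    · exact absurd h (ne_of_gt hp)
  have hAq : A * q = 0 := by nlinarith [mul_nonneg hC hp.le, mul_nonneg hA hq.le]
  rcases mul_eq_zero.mp hAq with h | h
  · exact h
  · exact absurd h (ne_of_gt hq)

set_option maxHeartbeats 1000000 in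
lemma hexLemma (z : Fin 6 → ℂ) (h0 : ∀ i, z i ≠ 0)
    (H1 : ∀ i j, i ≠ j → ‖z j‖ ≤ ‖z i - z j‖)
    (H2 : ∀ i j, i ≠ j → ‖z i - z j‖ = ‖z j‖ → 0 ≤ (z i).re) :
    False := by
  set r : Fin 6 → ℝ := fun i => ‖z i‖ with hrdef
  have hr : ∀ i, 0 < r i := fun i => norm_pos_iff.mpr (h0 i)
  set θ : Fin 6 → ℝ := fun i => arg (z i) with hθdef
  have hP : ∀ i j, (z i * (starRingEnd ℂ) (z j)).re = r i * r j * Real.cos (θ i - θ j) :=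
    fun i j => reconj (z i) (z j)
  -- step 1
  have step1 : ∀ i j, i ≠ j → 2 * (z i * (starRingEnd ℂ) (z j)).re ≤ (r i)^2 ∧
      2 * (z i * (starRingEnd ℂ) (z j)).re ≤ (r j)^2 := by
    intro i j hij
    have ha := H1 i j hij
    have hb := H1 j i hij.symm
    have habs : ‖z j - z i‖ = ‖z i - z j‖ := by
      exact norm_sub_rev _ _
    have hsq := sqabs_sub (z i) (z j)
    have h1 : (r j)^2 ≤ (‖z i - z j‖)^2 := by
      apply pow_le_pow_left₀ (norm_nonneg _) ha
    have h2 : (r i)^2 ≤ (‖z i - z j‖)^2 := by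
      rw [← habs]; apply pow_le_pow_left₀ (norm_nonneg _) hb
    constructor <;> [skip; skip] <;> nlinarith [h1, h2, hsq]
  -- step 2 : cosine bound
  have step2 : ∀ i j, i ≠ j → Real.cos (θ i - θ j) ≤ 1/2 := by
    intro i j hij
    by_contra hc
    push_neg at hc
    obtain ⟨hsa, hsb⟩ := step1 i j hij
    rw [hP i j] at hsa hsb
    have h2c : 0 < 2*Real.cos (θ i - θ j) - 1 := by linarith
    have hprod := mul_pos h2c (mul_pos (hr i) (hr j))
    have d1 : r j < r i := by nlinarith [hprod, hsa, hr i]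
    have d2 : r i < r j := by nlinarith [hprod, hsb, hr j]
    linarith
  -- step 3 : gap bounds
  have hθub : ∀ i, θ i ≤ Real.pi := fun i => Complex.arg_le_pi (z i)
  have hθlb : ∀ i, -Real.pi < θ i := fun i => Complex.neg_pi_lt_arg (z i)
  have pi_pos := Real.pi_pos
  have hgap : ∀ i j, i ≠ j → Real.pi/3 ≤ |θ i - θ j| ∧ |θ i - θ j| ≤ 5*Real.pi/3 := by
    intro i j hij
    have hc := step2 i j hij
    have habs2 : |θ i - θ j| < 2*Real.pi := by
      rw [abs_lt]; constructor <;> [linarith [hθub j, hθlb i]; linarith [hθub i, hθlb j]]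
    constructor
    · by_contra hlt
      push_neg at hlt
      have : Real.cos (Real.pi/3 : ℝ) < Real.cos |θ i - θ j| := by
        exact Real.cos_lt_cos_of_nonneg_of_le_pi (abs_nonneg _) (by linarith) hlt
      rw [Real.cos_abs, Real.cos_pi_div_three] at this
      linarith
    · by_contra hlt
      push_neg at hlt
      have h1 : Real.cos (2*Real.pi - |θ i - θ j|) = Real.cos |θ i - θ j| := Real.cos_two_pi_sub _
      have : Real.cos (Real.pi/3 : ℝ) < Real.cos (2*Real.pi - |θ i - θ j|) := by
        exact Real.cos_lt_cos_of_nonneg_of_le_pi (by linarith) (by linarith) (by linarith)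
      rw [h1, Real.cos_abs, Real.cos_pi_div_three] at this
      linarith
  
  -- injectivity of θ
  have θinj : Function.Injective θ := by
    intro i j h
    by_contra hne
    have h1 := (hgap i j hne).1
    rw [h, sub_self, abs_zero] at h1; linarith
  set σ : Equiv.Perm (Fin 6) := Tuple.sort θ with hσdef
  have φsm : StrictMono (fun k => θ (σ k)) :=
    (Tuple.monotone_sort θ).strictMono_of_injective (θinj.comp σ.injective)
  have hlt : ∀ k l : Fin 6, k < l → Real.pi/3 ≤ θ (σ l) - θ (σ k) := by
    intro k l hkl
    have h1 : θ (σ k) < θ (σ l) := φsm hkl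
    have h2 := (hgap (σ l) (σ k) (fun h => absurd (σ.injective h) (ne_of_gt hkl))).1
    rwa [abs_of_pos (sub_pos.mpr h1)] at h2
  have hub : θ (σ 5) - θ (σ 0) ≤ 5*Real.pi/3 := by
    have h1 : θ (σ 0) < θ (σ 5) := φsm (show (0:Fin 6) < 5 by decide)
    have h2 := (hgap (σ 5) (σ 0) (fun h => absurd (σ.injective h) (by decide))).2
    rwa [abs_of_pos (sub_pos.mpr h1)] at h2
  have g01 := hlt 0 1 (by decide)
  have g12 := hlt 1 2 (by decide)
  have g23 := hlt 2 3 (by decide)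
  have g34 := hlt 3 4 (by decide)
  have g45 := hlt 4 5 (by decide)
  have e01 : θ (σ 1) - θ (σ 0) = Real.pi/3 := by linarith
  have e12 : θ (σ 2) - θ (σ 1) = Real.pi/3 := by linarith
  have e23 : θ (σ 3) - θ (σ 2) = Real.pi/3 := by linarith
  have e34 : θ (σ 4) - θ (σ 3) = Real.pi/3 := by linarith
  have e45 : θ (σ 5) - θ (σ 4) = Real.pi/3 := by linarith
  -- consecutive pairs have equal norms and give nonneg re
  have consec : ∀ i j : Fin 6, i ≠ j → θ i - θ j = Real.pi/3 →
      0 ≤ (z i).re ∧ 0 ≤ (z j).re := by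
    intro i j hij hd
    have hcos : Real.cos (θ i - θ j) = 1/2 := by rw [hd, Real.cos_pi_div_three]
    have hPij : (z i * (starRingEnd ℂ) (z j)).re = r i * r j * (1/2) := by
      rw [hP, hcos]
    obtain ⟨s1, s2⟩ := step1 i j hij
    rw [hPij] at s1 s2
    have u1 : r j ≤ r i := by nlinarith [hr i, hr j]
    have u2 : r i ≤ r j := by nlinarith [hr i, hr j]
    have hrij : r i = r j := le_antisymm u2 u1
    have hd2 : (‖z i - z j‖)^2 = (r j)^2 := by
      have hq := sqabs_sub (z i) (z j)
      rw [hPij] at hq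
      rw [hq, show ‖z i‖ = r i from rfl, show ‖z j‖ = r j from rfl,
        hrij]; ring
    have hdn : ‖z i - z j‖ = r j := by
      have h1 := Real.sqrt_sq (norm_nonneg (z i - z j))
      have h2 := Real.sqrt_sq (le_of_lt (hr j))
      rw [← h1, ← h2, hd2]
    refine ⟨H2 i j hij hdn, H2 j i hij.symm ?_⟩
    rw [norm_sub_rev, hdn, show ‖z i‖ = r i from rfl, hrij]
  have hre : ∀ k : Fin 6, 0 ≤ (z (σ k)).re := by
    have c0 := consec (σ 1) (σ 0) (σ.injective.ne (by decide)) e01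
    have c1 := consec (σ 2) (σ 1) (σ.injective.ne (by decide)) e12
    have c2 := consec (σ 3) (σ 2) (σ.injective.ne (by decide)) e23
    have c3 := consec (σ 4) (σ 3) (σ.injective.ne (by decide)) e34
    have c4 := consec (σ 5) (σ 4) (σ.injective.ne (by decide)) e45
    intro k
    fin_cases k
    · exact c0.2
    · exact c1.2
    · exact c2.2
    · exact c3.2
    · exact c4.2
    · exact c4.1
  have hids : ∀ m : Fin 6, (z m).re^2 + (z m).im^2 = (r m)^2 := by
    intro m
    rw [show r m = ‖z m‖ from rfl, Complex.sq_norm, Complex.normSq_apply]; ring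
  -- antipodal pairs give zero re
  have anti : ∀ k l : Fin 6, θ (σ k) - θ (σ l) = Real.pi →
      (z (σ k)).re = 0 ∧ (z (σ l)).re = 0 := by
    intro k l hd
    have hcos : Real.cos (θ (σ k) - θ (σ l)) = -1 := by rw [hd, Real.cos_pi]
    have hPij : (z (σ k) * (starRingEnd ℂ) (z (σ l))).re
        = -(‖z (σ k)‖ * ‖z (σ l)‖) := by
      rw [hP, hcos]; ring
    have hsym : (z (σ l) * (starRingEnd ℂ) (z (σ k))).re
        = -(‖z (σ l)‖ * ‖z (σ k)‖) := by
      rw [resymm, hPij]; ring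
    exact ⟨ortho _ _ (hids _) (hids _) (hr _) (hr _) hPij (hre k) (hre l),
           ortho _ _ (hids _) (hids _) (hr _) (hr _) hsym (hre l) (hre k)⟩
  have a03 := anti 3 0 (by linarith)
  have a14 := anti 4 1 (by linarith)
  -- endgame with pair (σ 1, σ 0)
  have hPab : (z (σ 1) * (starRingEnd ℂ) (z (σ 0))).re = r (σ 1) * r (σ 0) * (1/2) := by
    rw [hP, e01, Real.cos_pi_div_three]
  have hexp : (z (σ 1)).im * (z (σ 0)).im = r (σ 1) * r (σ 0) * (1/2) := by
    have := hPab
    simp only [Complex.mul_re, Complex.conj_re, Complex.conj_im, a03.2, a14.2] at this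
    linarith [this]
  have him0 : (z (σ 0)).im^2 = (r (σ 0))^2 := by
    have := hids (σ 0); rw [a03.2] at this; linarith
  have him1 : (z (σ 1)).im^2 = (r (σ 1))^2 := by
    have := hids (σ 1); rw [a14.2] at this; linarith
  nlinarith [hexp, him0, him1, mul_pos (hr (σ 0)) (hr (σ 1)),
    sq_nonneg ((z (σ 1)).im * (z (σ 0)).im)]

section Transfer

private noncomputable def toC (p : EuclideanSpace ℝ (Fin 2)) : ℂ := ⟨p 0, p 1⟩

private lemma toC_abs (p : EuclideanSpace ℝ (Fin 2)) : ‖toC p‖ = ‖p‖ := by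
  rw [Complex.norm_def, Complex.normSq_apply, EuclideanSpace.norm_eq]
  simp [toC, Fin.sum_univ_two, Real.norm_eq_abs, sq_abs, ← sq]

private lemma toC_sub (p q : EuclideanSpace ℝ (Fin 2)) : toC (p - q) = toC p - toC q := by
  apply Complex.ext <;> simp [toC]

private lemma hexE (x : Fin 6 → EuclideanSpace ℝ (Fin 2)) (h0 : ∀ i, x i ≠ 0)
    (H1 : ∀ i j, i ≠ j → ‖x j‖ ≤ ‖x i - x j‖)
    (H2 : ∀ i j, i ≠ j → ‖x i - x j‖ = ‖x j‖ → 0 ≤ x i 0) : False := by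
  apply hexLemma (fun i => toC (x i))
  · intro i h
    apply h0 i
    have := congrArg norm h
    rw [toC_abs] at this
    simpa using this
  · intro i j hij
    rw [← toC_sub, toC_abs, toC_abs]
    exact H1 i j hij
  · intro i j hij h
    rw [← toC_sub, toC_abs, toC_abs] at h
    exact H2 i j hij h

end Transfer

section GraphTools

open SimpleGraph

variable {W : Type*} [Fintype W] [DecidableEq W]

private noncomputable def esum (f : Sym2 W → ℝ) (T : SimpleGraph W) : ℝ :=
  ∑ e ∈ T.edgeSet.toFinite.toFinset, f e

private lemma reach_aux {T H : SimpleGraph W} {u w : W} (hle : T.deleteEdges {s(u,w)} ≤ H)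
    (huw : H.Reachable u w) {a b : W} (hab : T.Reachable a b) : H.Reachable a b := by
  obtain ⟨p⟩ := hab
  induction p with
  | nil => exact Reachable.refl _
  | @cons x y c h' q ih =>
    refine Reachable.trans ?_ ih
    by_cases he : s(x, y) = s(u, w)
    · rw [Sym2.eq_iff] at he
      obtain ⟨rfl, rfl⟩ | ⟨rfl, rfl⟩ := he
      · exact huw
      · exact huw.symm
    · exact (hle (by simp only [deleteEdges_adj, Set.mem_singleton_iff]; exact ⟨h', he⟩)).reachable

private lemma esum_delete (f : Sym2 W → ℝ) (T : SimpleGraph W) {u w : W} (h : T.Adj u w) :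
    esum f (T.deleteEdges {s(u,w)}) = esum f T - f s(u,w) := by
  have hfin : ((T.deleteEdges {s(u,w)}).edgeSet.toFinite.toFinset)
      = T.edgeSet.toFinite.toFinset.erase s(u,w) := by
    ext e
    simp [edgeSet_deleteEdges, Set.Finite.mem_toFinset, and_comm]
  rw [esum, hfin, eq_sub_iff_add_eq]
  exact Finset.sum_erase_add _ _ (by simpa [Set.Finite.mem_toFinset] using h)

private lemma esum_swap (f : Sym2 W → ℝ) (T : SimpleGraph W) {u v w : W} (huw : T.Adj u w)
    (hnvw : ¬ T.Adj v w) (hvw : v ≠ w) :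
    esum f ((T.deleteEdges {s(u,w)}) ⊔ SimpleGraph.edge v w)
      = esum f T - f s(u,w) + f s(v,w) := by
  have hfin : (((T.deleteEdges {s(u,w)}) ⊔ SimpleGraph.edge v w).edgeSet.toFinite.toFinset)
      = insert s(v,w) ((T.deleteEdges {s(u,w)}).edgeSet.toFinite.toFinset) := by
    ext e
    simp only [Set.Finite.mem_toFinset, edgeSet_sup, Set.mem_union,
      edge_edgeSet_of_ne hvw, Finset.mem_insert, Set.mem_singleton_iff]
    tauto
  have hnm : s(v,w) ∉ ((T.deleteEdges {s(u,w)}).edgeSet.toFinite.toFinset) := by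
    simp only [Set.Finite.mem_toFinset, edgeSet_deleteEdges, Set.mem_diff, mem_edgeSet]
    tauto
  rw [esum, hfin, Finset.sum_insert hnm, ← esum, esum_delete f T huw]
  ring

private lemma no_triangle {T : SimpleGraph W} (hT : T.IsTree) {u v w : W}
    (huv : T.Adj u v) (huw : T.Adj u w) (hvw : v ≠ w) : ¬ T.Adj v w := by
  intro h
  have hp1 : (Walk.cons h Walk.nil : T.Walk v w).IsPath := by
    simp [Walk.cons_isPath_iff, hvw]
  have hp2 : (Walk.cons huv.symm (Walk.cons huw Walk.nil) : T.Walk v w).IsPath := by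
    simp [Walk.cons_isPath_iff, huw.ne, huv.ne', hvw]
  have := ((hT.existsUnique_path v w).unique hp1 hp2)
  have hlen := congrArg Walk.length this
  simp [Walk.length_cons] at hlen

end GraphTools



/-- The geometric graph on a finite point set `V ⊆ ℝ²`: two distinct points are
adjacent iff their Euclidean distance is at most `r`. -/
def geomGraph (V : Finset (EuclideanSpace ℝ (Fin 2))) (r : ℝ) : SimpleGraph V where
  Adj u v := u ≠ v ∧ dist (u : EuclideanSpace ℝ (Fin 2)) (v : EuclideanSpace ℝ (Fin 2)) ≤ r
  symm := ⟨fun u v h => ⟨h.1.symm, by rw [dist_comm]; exact h.2⟩⟩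
  loopless := ⟨fun v h => h.1 rfl⟩


/-- Every connected geometric graph in the plane has a spanning tree of maximum
degree at most five. -/
theorem geomGraph_spanning_tree (V : Finset (EuclideanSpace ℝ (Fin 2))) (r : ℝ)
    (hconn : (geomGraph V r).Connected) :
    ∃ T : SimpleGraph V, T ≤ geomGraph V r ∧ T.IsTree ∧
      ∀ v : V, {w | T.Adj v w}.ncard ≤ 5 := by
  classical
  open SimpleGraph in
  set G := geomGraph V r with hGdef
  -- lengths and tie-breaking weights on edges
  set len : Sym2 ↥V → ℝ := Sym2.lift ⟨fun a b =>
      dist (a : EuclideanSpace ℝ (Fin 2)) (b : EuclideanSpace ℝ (Fin 2)),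
      fun a b => dist_comm _ _⟩ with hlendef
  set wt : Sym2 ↥V → ℝ := Sym2.lift ⟨fun a b =>
      (a : EuclideanSpace ℝ (Fin 2)) 0 + (b : EuclideanSpace ℝ (Fin 2)) 0,
      fun a b => add_comm _ _⟩ with hwtdef
  let S : Set (SimpleGraph ↥V) := {T | T ≤ G ∧ T.Connected}
  have hSfin : S.Finite := Set.toFinite S
  have hSne : S.Nonempty := ⟨G, le_refl _, hconn⟩
  obtain ⟨T₀, hT₀S, hT₀min⟩ := Set.exists_min_image S (esum len) hSfin hSne
  let S' : Set (SimpleGraph ↥V) := {T | T ∈ S ∧ esum len T = esum len T₀}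
  obtain ⟨T, hTS', hTmin⟩ := Set.exists_min_image S' (esum wt)
    (hSfin.subset (fun U hU => hU.1)) ⟨T₀, hT₀S, rfl⟩
  obtain ⟨⟨hTG, hTconn⟩, hTlen⟩ := hTS'
  have hTlenmin : ∀ U ∈ S, esum len T ≤ esum len U := by
    intro U hU; rw [hTlen]; exact hT₀min U hU
  -- vertices adjacent in T are distinct points
  have hne : ∀ {a b : ↥V}, T.Adj a b →
      (a : EuclideanSpace ℝ (Fin 2)) ≠ (b : EuclideanSpace ℝ (Fin 2)) := by
    intro a b h hab
    exact h.ne (Subtype.coe_injective hab)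
  -- the minimizer is acyclic
  have hacyc : T.IsAcyclic := by
    intro x c hc
    cases c with
    | nil => exact hc.ne_nil rfl
    | @cons _ y _ h' q =>
      have hmem : s(x, y) ∈ (Walk.cons h' q).edges := by simp
      have hreach : (T \ SimpleGraph.fromEdgeSet {s(x,y)}).Reachable x y := by
        by_contra hnr
        have hb : T.IsBridge s(x,y) := isBridge_iff.mpr hnr
        rw [isBridge_iff_forall_cycle_notMem h'] at hb
        exact hb (Walk.cons h' q) hc hmem
      have hreach' : (T.deleteEdges {s(x,y)}).Reachable x y := hreach
      set T2 := T.deleteEdges {s(x,y)} with hT2def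
      have hT2S : T2 ∈ S := by
        haveI := hTconn.nonempty
        refine ⟨le_trans (deleteEdges_le _) hTG, SimpleGraph.Connected.mk ?_⟩
        intro a b
        exact reach_aux le_rfl hreach' (hTconn.preconnected a b)
      have hless := hTlenmin T2 hT2S
      rw [esum_delete len T h'] at hless
      have hpos : 0 < len s(x, y) := by
        rw [hlendef]
        simpa [Sym2.lift_mk] using dist_pos.mpr (hne h')
      linarith
  have hTtree : T.IsTree := ⟨hTconn, hacyc⟩
  refine ⟨T, hTG, hTtree, ?_⟩
  -- degree bound
  intro v₀
  by_contra hdeg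
  push_neg at hdeg
  -- extract six distinct neighbors
  have hnfin : {w | T.Adj v₀ w}.Finite := Set.toFinite _
  have hcard : 6 ≤ hnfin.toFinset.card := by
    rw [← Set.ncard_eq_toFinset_card _ hnfin]
    omega
  obtain ⟨t, hts, htcard⟩ := Finset.exists_subset_card_eq hcard
  have heqv : Fintype.card ↥t = 6 := by rw [Fintype.card_coe, htcard]
  let eqv : ↥t ≃ Fin 6 := Fintype.equivFinOfCardEq heqv
  set n : Fin 6 → ↥V := fun i => ((eqv.symm i : ↥t) : ↥V) with hndef
  have hninj : Function.Injective n := by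
    intro i j h
    exact eqv.symm.injective (Subtype.coe_injective h)
  have hnadj : ∀ i, T.Adj v₀ (n i) := by
    intro i
    have := hts (eqv.symm i).2
    simpa [Set.Finite.mem_toFinset] using this
  -- swap optimality
  have hswap : ∀ v w : ↥V, T.Adj v₀ v → T.Adj v₀ w → v ≠ w →
      dist (v : EuclideanSpace ℝ (Fin 2)) (w : EuclideanSpace ℝ (Fin 2)) ≤ r →
      dist (v₀ : EuclideanSpace ℝ (Fin 2)) (w : EuclideanSpace ℝ (Fin 2)) ≤
        dist (v : EuclideanSpace ℝ (Fin 2)) (w : EuclideanSpace ℝ (Fin 2)) ∧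
      (dist (v : EuclideanSpace ℝ (Fin 2)) (w : EuclideanSpace ℝ (Fin 2)) =
        dist (v₀ : EuclideanSpace ℝ (Fin 2)) (w : EuclideanSpace ℝ (Fin 2)) →
        (v₀ : EuclideanSpace ℝ (Fin 2)) 0 ≤ (v : EuclideanSpace ℝ (Fin 2)) 0) := by
    intro v w hv hw hvw hdist
    have hnvw : ¬ T.Adj v w := no_triangle hTtree hv hw hvw
    set T' := (T.deleteEdges {s(v₀,w)}) ⊔ SimpleGraph.edge v w with hT'def
    have hT'G : T' ≤ G := by
      refine sup_le (le_trans (deleteEdges_le _) hTG) ?_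
      intro a b hab
      rw [edge_adj] at hab
      obtain ⟨⟨rfl, rfl⟩ | ⟨rfl, rfl⟩, hne'⟩ := hab
      · exact ⟨hvw, hdist⟩
      · exact ⟨hvw.symm, by rwa [_root_.dist_comm]⟩
    have hadj1 : T'.Adj v₀ v := by
      have hd : (T.deleteEdges {s(v₀,w)}).Adj v₀ v := by
        rw [SimpleGraph.deleteEdges_adj]
        refine ⟨hv, ?_⟩
        simp only [Set.mem_singleton_iff, Sym2.eq_iff]
        rintro (⟨-, rfl⟩ | ⟨rfl, rfl⟩)
        · exact hvw rfl
        · exact hw.ne rfl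
      exact (SimpleGraph.sup_adj _ _ _ _).mpr (Or.inl hd)
    have hadj2 : T'.Adj v w := by
      refine (SimpleGraph.sup_adj _ _ _ _).mpr (Or.inr ?_)
      rw [SimpleGraph.edge_adj]
      exact ⟨Or.inl ⟨rfl, rfl⟩, hvw⟩
    have hreach : T'.Reachable v₀ w := hadj1.reachable.trans hadj2.reachable
    have hT'S : T' ∈ S := by
      haveI := hTconn.nonempty
      refine ⟨hT'G, SimpleGraph.Connected.mk ?_⟩
      intro a b
      exact reach_aux le_sup_left hreach (hTconn.preconnected a b)
    have hsums := esum_swap len T hw hnvw hvw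
    have hsumw := esum_swap wt T hw hnvw hvw
    have hlen1 : len s(v₀, w) ≤ len s(v, w) := by
      have := hTlenmin T' hT'S
      rw [hsums] at this
      linarith
    constructor
    · simpa [hlendef, Sym2.lift_mk] using hlen1
    · intro heq
      have heq' : len s(v, w) = len s(v₀, w) := by
        simp only [hlendef, Sym2.lift_mk]
        exact heq
      have hT'S' : T' ∈ S' := by
        refine ⟨hT'S, ?_⟩
        rw [hsums, heq', ← hTlen]
        ring
      have := hTmin T' hT'S'
      rw [hsumw] at this
      have hwt : wt s(v₀, w) ≤ wt s(v, w) := by linarith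
      simp only [hwtdef, Sym2.lift_mk] at hwt
      linarith
  -- build the configuration for the geometric lemma
  set x : Fin 6 → EuclideanSpace ℝ (Fin 2) :=
    fun i => (n i : EuclideanSpace ℝ (Fin 2)) - (v₀ : EuclideanSpace ℝ (Fin 2)) with hxdef
  have hx0 : ∀ i, x i ≠ 0 := by
    intro i h
    exact hne (hnadj i) (sub_eq_zero.mp h).symm
  have hxnorm : ∀ i, ‖x i‖ =
      dist (v₀ : EuclideanSpace ℝ (Fin 2)) ((n i : ↥V) : EuclideanSpace ℝ (Fin 2)) := by
    intro i
    rw [_root_.dist_comm, dist_eq_norm]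
  have hxsub : ∀ i j, ‖x i - x j‖ =
      dist ((n i : ↥V) : EuclideanSpace ℝ (Fin 2)) ((n j : ↥V) : EuclideanSpace ℝ (Fin 2)) := by
    intro i j
    rw [dist_eq_norm]
    congr 1
    simp [hxdef]
  apply hexE x hx0
  · intro i j hij
    rw [hxnorm, hxsub]
    by_cases hdij : dist ((n i : ↥V) : EuclideanSpace ℝ (Fin 2))
        ((n j : ↥V) : EuclideanSpace ℝ (Fin 2)) ≤ r
    · exact (hswap (n i) (n j) (hnadj i) (hnadj j) (fun h => hij (hninj h)) hdij).1
    · push_neg at hdij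
      have : dist (v₀ : EuclideanSpace ℝ (Fin 2)) ((n j : ↥V) : EuclideanSpace ℝ (Fin 2)) ≤ r :=
        (hTG (hnadj j)).2
      linarith
  · intro i j hij h
    rw [hxnorm, hxsub] at h
    have hdr : dist ((n i : ↥V) : EuclideanSpace ℝ (Fin 2))
        ((n j : ↥V) : EuclideanSpace ℝ (Fin 2)) ≤ r := by
      rw [h]
      exact (hTG (hnadj j)).2
    have := (hswap (n i) (n j) (hnadj i) (hnadj j) (fun hh => hij (hninj hh)) hdr).2 h
    have hxi0 : x i 0 = (n i : EuclideanSpace ℝ (Fin 2)) 0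
        - (v₀ : EuclideanSpace ℝ (Fin 2)) 0 := by
      simp [hxdef]
    rw [hxi0]
    linarith
end

section
/- For every finite connected graph G and every positive integer s, the acquaintance time of the lexicographic product G[K_s] is at most the acquaintance time of G: AC(G[K_s]) ≤ AC(G). -/
/-- A single round of the acquaintance process: agents are swapped along a
matching of `G`. The permutation `σ` is an involution and moves agents only
along edges of `G`. -/
def IsMatchingStep {V : Type*} (G : SimpleGraph V) (σ : Equiv.Perm V) : Prop :=
  (∀ v, σ (σ v) = v) ∧ ∀ v, σ v = v ∨ G.Adj v (σ v)

/-- A strategy: `f t` gives the position of each agent (indexed by its initial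
vertex) after `t` rounds; consecutive configurations differ by a matching swap. -/
def IsSchedule {V : Type*} (G : SimpleGraph V) (f : ℕ → Equiv.Perm V) : Prop :=
  f 0 = 1 ∧ ∀ t, IsMatchingStep G (f (t + 1) * (f t)⁻¹)

/-- After `k` rounds of strategy `f`, every pair of distinct agents has been
acquainted, i.e. has simultaneously occupied adjacent vertices. -/
def Acquaints {V : Type*} (G : SimpleGraph V) (f : ℕ → Equiv.Perm V) (k : ℕ) : Prop :=
  ∀ a b : V, a ≠ b → ∃ t ≤ k, G.Adj (f t a) (f t b)

/-- The acquaintance time of `G`. -/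
noncomputable def acqTime {V : Type*} (G : SimpleGraph V) : ℕ :=
  sInf {k | ∃ f, IsSchedule G f ∧ Acquaints G f k}


/-- The lexicographic product `G[K_s]`: each vertex of `G` is replaced by an
`s`-clique, with all edges between cliques of adjacent vertices. -/
def lexClique {V : Type*} (G : SimpleGraph V) (s : ℕ) : SimpleGraph (V × Fin s) where
  Adj x y := G.Adj x.1 y.1 ∨ (x.1 = y.1 ∧ x.2 ≠ y.2)
  symm := ⟨fun x y h => h.elim (fun h => Or.inl h.symm)
    (fun h => Or.inr ⟨h.1.symm, h.2.symm⟩)⟩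
  loopless := ⟨fun x h => h.elim (fun h => G.loopless.irrefl _ h) (fun h => h.2 rfl)⟩

-- Lemma B
lemma lemB {V : Type*} {G : SimpleGraph V} (hG : G.Connected) :
    ∀ (d : ℕ) (p : Equiv.Perm V) (a b : V), a ≠ b → G.dist (p a) (p b) ≤ d →
    ∃ (n : ℕ) (g : ℕ → Equiv.Perm V), g 0 = p ∧
      (∀ t, IsMatchingStep G (g (t + 1) * (g t)⁻¹)) ∧ G.Adj (g n a) (g n b) := by
  classical
  intro d
  induction d with
  | zero =>
    intro p a b hab hd
    exfalso
    have : p a = p b := (hG.dist_eq_zero_iff).mp (Nat.le_zero.mp hd)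
    exact hab (p.injective this)
  | succ d ih =>
    intro p a b hab hd
    by_cases hadj : G.Adj (p a) (p b)
    · refine ⟨0, fun _ => p, rfl, fun t => ?_, hadj⟩
      refine ⟨fun v => by simp, fun v => Or.inl (by simp)⟩
    · obtain ⟨W, hW⟩ := hG.exists_walk_length_eq_dist (p a) (p b)
      have hpab : p a ≠ p b := fun h => hab (p.injective h)
      obtain ⟨c, h', W', rfl⟩ := SimpleGraph.Walk.exists_eq_cons_of_ne hpab W
      have hcb : c ≠ p b := fun h => hadj (h ▸ h')
      have hca : p a ≠ c := G.ne_of_adj h'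
      set q : Equiv.Perm V := Equiv.swap (p a) c * p with hq
      have hqa : q a = c := by simp [hq, Equiv.swap_apply_left]
      have hqb : q b = p b := by
        simp [hq]
        rw [Equiv.swap_apply_of_ne_of_ne]
        · exact fun h => hab ((p.injective h).symm)
        · exact fun h => hcb h.symm
      have hdist : G.dist (q a) (q b) ≤ d := by
        rw [hqa, hqb]
        calc G.dist c (p b) ≤ W'.length := SimpleGraph.dist_le W'
          _ ≤ d := by
            have : W'.length + 1 ≤ d + 1 := by
              rw [← SimpleGraph.Walk.length_cons h', hW]; exact hd
            omega
      obtain ⟨n, g, hg0, hgstep, hgadj⟩ := ih q a b hab hdist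
      refine ⟨n + 1, fun t => Nat.casesOn t p (fun t' => g t'), rfl, ?_, hgadj⟩
      intro t
      cases t with
      | zero =>
        show IsMatchingStep G (g 0 * p⁻¹)
        have hE : g 0 * p⁻¹ = Equiv.swap (p a) c := by
          rw [hg0, hq, mul_assoc, mul_inv_cancel, mul_one]
        rw [hE]
        refine ⟨fun v => by simp, fun v => ?_⟩
        rcases eq_or_ne v (p a) with rfl | h1
        · exact Or.inr (by rwa [Equiv.swap_apply_left])
        rcases eq_or_ne v c with rfl | h2
        · exact Or.inr (by rw [Equiv.swap_apply_right]; exact h'.symm)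
        · exact Or.inl (Equiv.swap_apply_of_ne_of_ne h1 h2)
      | succ t =>
        exact hgstep t

lemma lemC {V : Type*} {G : SimpleGraph V} (hG : G.Connected) :
    ∀ (L : List (V × V)) (p : Equiv.Perm V),
    ∃ (n : ℕ) (g : ℕ → Equiv.Perm V), g 0 = p ∧
      (∀ t, IsMatchingStep G (g (t + 1) * (g t)⁻¹)) ∧
      ∀ q ∈ L, q.1 ≠ q.2 → ∃ t ≤ n, G.Adj (g t q.1) (g t q.2) := by
  intro L
  induction L with
  | nil =>
    intro p
    exact ⟨0, fun _ => p, rfl, fun t => ⟨fun v => by simp, fun v => Or.inl (by simp)⟩,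
      by simp⟩
  | cons hd L ih =>
    intro p
    obtain ⟨a, b⟩ := hd
    by_cases hab : a = b
    · obtain ⟨n, g, hg0, hstep, hacq⟩ := ih p
      refine ⟨n, g, hg0, hstep, ?_⟩
      intro q hq hne
      rcases List.mem_cons.mp hq with rfl | hq
      · exact absurd hab hne
      · exact hacq q hq hne
    · obtain ⟨n1, g1, hg10, hstep1, hadj1⟩ :=
        lemB hG (G.dist (p a) (p b)) p a b hab le_rfl
      obtain ⟨n2, g2, hg20, hstep2, hacq2⟩ := ih (g1 n1)
      refine ⟨n1 + n2, fun t => if t < n1 then g1 t else g2 (t - n1), ?_, ?_, ?_⟩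
      · by_cases h : 0 < n1
        · simp [h, hg10]
        · have : n1 = 0 := by omega
          simp [this, hg20, hg10]
      · intro t
        by_cases h1 : t + 1 < n1
        · have h2 : t < n1 := by omega
          simpa [h1, h2] using hstep1 t
        · by_cases h2 : t < n1
          · have h3 : t + 1 = n1 := by omega
            have : g2 (t + 1 - n1) = g1 (t + 1) := by
              rw [h3]; simp [hg20]
            simpa [h1, h2, this, hg20, h3] using hstep1 t
          · have h3 : ¬ (t + 1 < n1) := by omega
            have e1 : t + 1 - n1 = (t - n1) + 1 := by omega
            simpa [h3, h2, e1] using hstep2 (t - n1)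
      · intro q hq hne
        rcases List.mem_cons.mp hq with rfl | hq
        · refine ⟨n1, by omega, ?_⟩
          simp only [lt_irrefl, if_false, Nat.sub_self, hg20]
          exact hadj1
        · obtain ⟨t, ht, hadj⟩ := hacq2 q hq hne
          refine ⟨n1 + t, by omega, ?_⟩
          have h1 : ¬ (n1 + t < n1) := by omega
          have e1 : n1 + t - n1 = t := by omega
          simpa [h1, e1] using hadj

lemma acq_nonempty {V : Type*} [Fintype V] {G : SimpleGraph V} (hG : G.Connected) :
    {k | ∃ f, IsSchedule G f ∧ Acquaints G f k}.Nonempty := by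
  classical
  obtain ⟨n, g, hg0, hstep, hacq⟩ := lemC hG (Finset.univ ×ˢ Finset.univ).toList 1
  exact ⟨n, g, ⟨hg0, hstep⟩, fun a b hab =>
    hacq (a, b) (by simp) hab⟩

/-- `AC(G[K_s]) ≤ AC(G)` for every finite connected graph `G` and `s ≥ 1`. -/
theorem acqTime_lexClique_le {V : Type*} [Fintype V] (G : SimpleGraph V)
    (hG : G.Connected) (s : ℕ) (hs : 0 < s) :
    acqTime (lexClique G s) ≤ acqTime G := by
  classical
  have hk : acqTime G ∈ {k | ∃ f, IsSchedule G f ∧ Acquaints G f k} :=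
    Nat.sInf_mem (acq_nonempty hG)
  obtain ⟨f, ⟨hf0, hfstep⟩, hfacq⟩ := hk
  set F : ℕ → Equiv.Perm (V × Fin s) :=
    fun t => Equiv.prodCongr (f t) (Equiv.refl (Fin s)) with hF
  have hFapp : ∀ t x, F t x = (f t x.1, x.2) := fun t x => rfl
  have hFmul : ∀ t x, (F (t + 1) * (F t)⁻¹) x = ((f (t + 1) * (f t)⁻¹) x.1, x.2) := by
    intro t x
    simp [hF, Equiv.Perm.mul_apply, Equiv.Perm.inv_def, Equiv.prodCongr_symm, Prod.map]
  apply Nat.sInf_le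
  refine ⟨F, ⟨?_, ?_⟩, ?_⟩
  · ext x
    · simp [hF, hf0]
    · simp [hF, hf0]
  · intro t
    obtain ⟨hinv, hmov⟩ := hfstep t
    refine ⟨fun v => by
      rw [hFmul, hFmul]
      have := hinv v.1
      simp only [Equiv.Perm.mul_apply] at this ⊢
      rw [this], fun v => ?_⟩
    rw [hFmul]
    rcases hmov v.1 with h | h
    · exact Or.inl (by rw [h])
    · exact Or.inr (Or.inl h)
  · rintro ⟨a, i⟩ ⟨b, j⟩ hne
    by_cases hab : a = b
    · subst hab
      have hij : i ≠ j := fun h => hne (by rw [h])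
      exact ⟨0, Nat.zero_le _, Or.inr ⟨rfl, by simpa [hFapp] using hij⟩⟩
    · obtain ⟨t, ht, hadj⟩ := hfacq a b hab
      exact ⟨t, ht, Or.inl (by simpa [hFapp] using hadj)⟩
end

section
/- Let G be a graph on n vertices that contains a Hamiltonian path. Then there exists a strategy of at most 2n rounds in which every pair of agents becomes acquainted and, moreover, each agent visits every vertex of G. -/
namespace AcqAux

def F (n y : ℕ) : ℕ := if y % (2 * n) < n then y % (2 * n) else 2 * n - 1 - y % (2 * n)

def phi (n i : ℕ) : ℕ := if i % 2 = 0 then i else 2 * n - 1 - i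

def pos (n i t : ℕ) : ℕ := F n (phi n i + t)

lemma F_lt {n : ℕ} (hn : 0 < n) (y : ℕ) : F n y < n := by
  have h := Nat.mod_lt y (show 0 < 2*n by omega)
  unfold F; split <;> omega

lemma F_of_lt {n x : ℕ} (hx : x < 2*n) : F n x = if x < n then x else 2*n - 1 - x := by
  unfold F; rw [Nat.mod_eq_of_lt hx]

lemma F_add {n x : ℕ} : F n (2*n + x) = F n x := by
  unfold F; rw [Nat.add_mod_left]

lemma phi_lt {n i : ℕ} (hn : 0 < n) (hi : i < n) : phi n i < 2 * n := by
  unfold phi; split <;> omega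

lemma phi_even {n i : ℕ} (hi : i < n) : phi n i % 2 = 0 := by
  unfold phi; split
  · assumption
  · omega

lemma phi_inj {n i j : ℕ} (hi : i < n) (hj : j < n) (h : phi n i = phi n j) : i = j := by
  unfold phi at h; split at h <;> split at h <;> omega

lemma pos_lt {n : ℕ} (hn : 0 < n) (i t : ℕ) : pos n i t < n := F_lt hn _

lemma pos_zero {n i : ℕ} (hn : 0 < n) (hi : i < n) : pos n i 0 = i := by
  unfold pos
  rw [Nat.add_zero, F_of_lt (phi_lt hn hi)]
  unfold phi
  by_cases hp : i % 2 = 0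
  · rw [if_pos hp]; rw [if_pos hi]
  · rw [if_neg hp]; rw [if_neg (by omega)]; omega

lemma mod2 {n x : ℕ} : x % (2*n) % 2 = x % 2 := Nat.mod_mod_of_dvd _ ⟨n, rfl⟩

lemma F_inj {n x y : ℕ} (hn : 0 < n) (hp : x % 2 = y % 2) (h : F n x = F n y) :
    x % (2*n) = y % (2*n) := by
  have h1 : x % (2*n) < 2*n := Nat.mod_lt _ (by omega)
  have h2 : y % (2*n) < 2*n := Nat.mod_lt _ (by omega)
  have p1 : x % (2*n) % 2 = x % 2 := mod2
  have p2 : y % (2*n) % 2 = y % 2 := mod2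
  unfold F at h
  split at h <;> split at h <;> omega

lemma pos_inj {n i j t : ℕ} (hn : 0 < n) (hi : i < n) (hj : j < n)
    (h : pos n i t = pos n j t) : i = j := by
  have hae := phi_even hi
  have hbe := phi_even (n := n) hj
  have h2 : (phi n i + t) % (2*n) = (phi n j + t) % (2*n) :=
    F_inj hn (by omega) h
  have h3 : phi n i % (2*n) = phi n j % (2*n) :=
    Nat.ModEq.add_right_cancel' t h2
  rw [Nat.mod_eq_of_lt (phi_lt hn hi), Nat.mod_eq_of_lt (phi_lt hn hj)] at h3
  exact phi_inj hi hj h3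

lemma F_eq_of {n x y : ℕ} (hn : 0 < n) (h : (x + y) % (2*n) = 2*n - 1) : F n x = F n y := by
  have h1 : x % (2*n) < 2*n := Nat.mod_lt _ (by omega)
  have h2 : y % (2*n) < 2*n := Nat.mod_lt _ (by omega)
  have hadd : (x % (2*n) + y % (2*n)) % (2*n) = 2*n - 1 := by
    rw [← Nat.add_mod]; exact h
  have hsum : x % (2*n) + y % (2*n) = 2*n - 1 := by
    rcases Nat.lt_or_ge (x % (2*n) + y % (2*n)) (2*n) with hc | hc
    · rw [Nat.mod_eq_of_lt hc] at hadd; omega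
    · rw [Nat.mod_eq_sub_mod hc, Nat.mod_eq_of_lt (by omega)] at hadd; omega
  unfold F
  split <;> split <;> omega

lemma F_step {n : ℕ} (hn : 0 < n) (y : ℕ) :
    F n (y+1) = F n y ∨ F n (y+1) = F n y + 1 ∨ F n y = F n (y+1) + 1 := by
  have h1 : y % (2*n) < 2*n := Nat.mod_lt _ (by omega)
  have h2 : (y+1) % (2*n) = (y % (2*n) + 1) % (2*n) := by
    rw [Nat.mod_add_mod]
  unfold F
  rcases Nat.lt_or_ge (y % (2*n) + 1) (2*n) with hc | hc
  · rw [h2, Nat.mod_eq_of_lt hc]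
    split <;> split <;> omega
  · have h3 : (y % (2*n) + 1) % (2*n) = 0 := by
      have e : y % (2*n) + 1 = 2*n := by omega
      rw [e, Nat.mod_self]
    rw [h2, h3]
    split <;> split <;> omega

lemma step_cases {n : ℕ} (hn : 0 < n) (i t : ℕ) :
    pos n i (t+1) = pos n i t ∨ pos n i (t+1) = pos n i t + 1 ∨
      pos n i t = pos n i (t+1) + 1 := by
  have e : phi n i + (t+1) = (phi n i + t) + 1 := by omega
  unfold pos
  rw [e]
  exact F_step hn _

lemma swap_partner {n : ℕ} (hn : 0 < n) (i t : ℕ) (hi : i < n) :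
    ∃ j, j < n ∧ pos n j t = pos n i (t+1) ∧ pos n j (t+1) = pos n i t := by
  have hae := phi_even hi
  have hs1 : (phi n i + 2*t) % (2*n) < 2*n := Nat.mod_lt _ (by omega)
  have hs2 : (phi n i + 2*t) % (2*n) % 2 = (phi n i + 2*t) % 2 := mod2
  set s := (phi n i + 2*t) % (2*n) with hs
  have hsev : s % 2 = 0 := by omega
  obtain hdm := Nat.div_add_mod (phi n i + 2*t) (2*n)
  rw [← hs] at hdm
  set Q := 2*n * ((phi n i + 2*t) / (2*n)) with hQ
  set ρ := 2*n - 2 - s with hρ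
  have hρlt : ρ < 2*n := by omega
  have hρev : ρ % 2 = 0 := by omega
  have hmod : (Q + (2*n - 1)) % (2*n) = 2*n - 1 := by
    rw [hQ, Nat.mul_add_mod]; exact Nat.mod_eq_of_lt (by omega)
  have hphij : phi n (if ρ < n then ρ else 2*n - 1 - ρ) = ρ := by
    by_cases hc : ρ < n
    · rw [if_pos hc]; unfold phi; rw [if_pos hρev]
    · rw [if_neg hc]; unfold phi; rw [if_neg (by omega)]; omega
  refine ⟨if ρ < n then ρ else 2*n - 1 - ρ, ?_, ?_, ?_⟩
  · split <;> omega
  · unfold pos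
    rw [hphij]
    refine F_eq_of hn ?_
    rw [show ρ + t + (phi n i + (t+1)) = Q + (2*n - 1) by omega]
    exact hmod
  · unfold pos
    rw [hphij]
    refine F_eq_of hn ?_
    rw [show ρ + (t+1) + (phi n i + t) = Q + (2*n - 1) by omega]
    exact hmod

lemma meet {n i j : ℕ} (hn : 0 < n) (hi : i < n) (hj : j < n) (hab : phi n i < phi n j) :
    ∃ t ≤ 2*n, pos n i t + 1 = pos n j t := by
  have ha := phi_lt hn hi
  have hb := phi_lt hn hj
  have hae := phi_even hi
  have hbe := phi_even (n := n) hj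
  refine ⟨(phi n j - phi n i)/2 + 2*n - phi n j, by omega, ?_⟩
  unfold pos
  rw [show phi n j + ((phi n j - phi n i)/2 + 2*n - phi n j)
        = 2*n + (phi n j - phi n i)/2 by omega,
      show phi n i + ((phi n j - phi n i)/2 + 2*n - phi n j)
        = 2*n - (phi n j - phi n i)/2 by omega,
      F_add, F_of_lt (show (phi n j - phi n i)/2 < 2*n by omega),
      F_of_lt (show 2*n - (phi n j - phi n i)/2 < 2*n by omega),
      if_pos (show (phi n j - phi n i)/2 < n by omega),
      if_neg (show ¬(2*n - (phi n j - phi n i)/2 < n) by omega)]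
  omega

lemma visit {n i w : ℕ} (hn : 0 < n) (hi : i < n) (hw : w < n) :
    ∃ t ≤ 2*n, pos n i t = w := by
  have ha := phi_lt hn hi
  rcases le_or_gt (phi n i) w with h | h
  · refine ⟨w - phi n i, by omega, ?_⟩
    unfold pos
    rw [show phi n i + (w - phi n i) = w by omega, F_of_lt (by omega), if_pos hw]
  · refine ⟨w + 2*n - phi n i, by omega, ?_⟩
    unfold pos
    rw [show phi n i + (w + 2*n - phi n i) = 2*n + w by omega, F_add,
        F_of_lt (by omega), if_pos hw]

end AcqAux

open AcqAux in
/-- If `G` on `n` vertices has a Hamiltonian path, then there is a strategy of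
at most `2n` rounds in which every pair of agents becomes acquainted and,
moreover, every agent visits every vertex. -/
theorem hamiltonian_path_strategy {V : Type*} [Fintype V] [DecidableEq V] (G : SimpleGraph V)
    (hpath : ∃ (u v : V) (p : G.Walk u v), p.IsHamiltonian) :
    ∃ f : ℕ → Equiv.Perm V, IsSchedule G f ∧
      Acquaints G f (2 * Fintype.card V) ∧
      ∀ a w : V, ∃ t ≤ 2 * Fintype.card V, f t a = w := by
  classical
  obtain ⟨u, v, p, hp⟩ := hpath
  have hnodup : p.support.Nodup := hp.isPath.support_nodup
  have hmem : ∀ w : V, w ∈ p.support := hp.mem_support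
  set N := p.support.length with hNdef
  have hN : 0 < N := List.length_pos_iff.mpr p.support_ne_nil
  have hcard : Fintype.card V = N := by
    rw [← Finset.card_univ, ← hp.support_toFinset, List.toFinset_card_of_nodup hnodup]
  let e : Fin N ≃ V := List.Nodup.getEquivOfForallMemList p.support hnodup hmem
  have hadj : ∀ (k : ℕ) (hk : k + 1 < N),
      G.Adj (e ⟨k, by omega⟩) (e ⟨k + 1, hk⟩) := by
    have hc := p.isChain_adj_support
    rw [List.isChain_iff_getElem] at hc
    intro k hk
    exact hc k (by omega)
  let gFin : ℕ → Fin N → Fin N := fun t i => ⟨pos N i t, pos_lt hN _ _⟩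
  have hginj : ∀ t, Function.Injective (gFin t) := fun t i j hij =>
    Fin.ext (pos_inj hN i.isLt j.isLt (congrArg Fin.val hij))
  let P : ℕ → Equiv.Perm (Fin N) := fun t =>
    Equiv.ofBijective (gFin t) (Finite.injective_iff_bijective.mp (hginj t))
  let f : ℕ → Equiv.Perm V := fun t => (e.symm.trans (P t)).trans e
  have happ : ∀ (t : ℕ) (i : Fin N), f t (e i) = e (gFin t i) := by
    intro t i
    show e (P t (e.symm (e i))) = e (gFin t i)
    rw [Equiv.symm_apply_apply]
    rfl
  have hval : ∀ (t : ℕ) (a : V), f t a = e (gFin t (e.symm a)) := by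
    intro t a
    rw [← happ t (e.symm a), e.apply_symm_apply]
  refine ⟨f, ⟨?_, ?_⟩, ?_, ?_⟩
  · -- f 0 = 1
    ext w
    rw [hval 0 w]
    have h0 : gFin 0 (e.symm w) = e.symm w := Fin.ext (pos_zero hN (e.symm w).isLt)
    rw [h0, e.apply_symm_apply]
    rfl
  · -- matching steps
    intro t
    constructor
    · -- involution
      intro w
      simp only [Equiv.Perm.mul_apply]
      set a := (f t)⁻¹ w with hadef
      have hw : f t a = w := Equiv.apply_symm_apply _ w
      obtain ⟨j, hjN, hj1, hj2⟩ := swap_partner hN (e.symm a : ℕ) t (e.symm a).isLt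
      have hb1 : f t (e ⟨j, hjN⟩) = f (t + 1) a := by
        rw [happ, hval (t + 1) a]
        exact congrArg e (Fin.ext hj1)
      have hb2 : f (t + 1) (e ⟨j, hjN⟩) = f t a := by
        rw [happ, hval t a]
        exact congrArg e (Fin.ext hj2)
      rw [← hb1, (show (f t)⁻¹ (f t (e ⟨j, hjN⟩)) = e ⟨j, hjN⟩ from Equiv.symm_apply_apply (f t) _), hb2, hw]
    · -- moves along edges
      intro w
      simp only [Equiv.Perm.mul_apply]
      set a := (f t)⁻¹ w with hadef
      have hw : f t a = w := Equiv.apply_symm_apply _ w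
      rcases step_cases hN (e.symm a : ℕ) t with hc | hc | hc
      · left
        rw [hval (t + 1) a, ← hw, hval t a]
        exact congrArg e (Fin.ext hc)
      · right
        rw [hval (t + 1) a, ← hw, hval t a]
        have hlt : pos N (e.symm a : ℕ) t + 1 < N := by
          have := pos_lt hN (e.symm a : ℕ) (t + 1); omega
        have h2 : gFin (t + 1) (e.symm a) = ⟨pos N (e.symm a : ℕ) t + 1, hlt⟩ :=
          Fin.ext hc
        rw [h2]
        exact hadj _ hlt
      · right
        rw [hval (t + 1) a, ← hw, hval t a]
        have hlt : pos N (e.symm a : ℕ) (t + 1) + 1 < N := by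
          have := pos_lt hN (e.symm a : ℕ) t; omega
        have h2 : gFin t (e.symm a) = ⟨pos N (e.symm a : ℕ) (t + 1) + 1, hlt⟩ :=
          Fin.ext hc
        rw [h2]
        exact (hadj _ hlt).symm
  · -- Acquaints
    intro a b hab
    have hij : (e.symm a : Fin N) ≠ e.symm b := fun h =>
      hab (by rw [← e.apply_symm_apply a, h, e.apply_symm_apply])
    rcases lt_trichotomy (phi N (e.symm a : ℕ)) (phi N (e.symm b : ℕ)) with hc | hc | hc
    · obtain ⟨t, ht, hm⟩ := meet hN (e.symm a).isLt (e.symm b).isLt hc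
      refine ⟨t, by omega, ?_⟩
      rw [hval t a, hval t b]
      have hlt : pos N (e.symm a : ℕ) t + 1 < N := by
        have := pos_lt hN (e.symm b : ℕ) t; omega
      have h2 : gFin t (e.symm b) = ⟨pos N (e.symm a : ℕ) t + 1, hlt⟩ :=
        Fin.ext hm.symm
      rw [h2]
      exact hadj _ hlt
    · exact absurd (Fin.ext (phi_inj (e.symm a).isLt (e.symm b).isLt hc)) hij
    · obtain ⟨t, ht, hm⟩ := meet hN (e.symm b).isLt (e.symm a).isLt hc
      refine ⟨t, by omega, ?_⟩
      rw [hval t a, hval t b]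
      have hlt : pos N (e.symm b : ℕ) t + 1 < N := by
        have := pos_lt hN (e.symm a : ℕ) t; omega
      have h2 : gFin t (e.symm a) = ⟨pos N (e.symm b : ℕ) t + 1, hlt⟩ :=
        Fin.ext hm.symm
      rw [h2]
      exact (hadj _ hlt).symm
  · -- visits
    intro a w
    obtain ⟨t, ht, hm⟩ := visit hN (e.symm a).isLt (e.symm w).isLt
    refine ⟨t, by omega, ?_⟩
    rw [hval t a]
    have h2 : gFin t (e.symm a) = e.symm w := Fin.ext hm
    rw [h2, e.apply_symm_apply]
end

section
/- There exists a universal constant γ > 0 such that for all t ∈ ℕ and all 0 < p < 1, the random bipartite graph B(t,p) with parts X, Y of size t, where each pair (x,y) ∈ X × Y is an edge independently with probability p, contains a perfect matching with probability at least 1 − C·t·exp(−γ·t·p) for some universal constant C. -/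
open MeasureTheory
open scoped ENNReal

/-- The Bernoulli measure with parameter `p` on `Bool`. -/
noncomputable def bern (p : ℝ) : Measure Bool :=
  ENNReal.ofReal p • Measure.dirac true + ENNReal.ofReal (1 - p) • Measure.dirac false

instance (p : ℝ) : IsFiniteMeasure (bern p) where
  measure_univ_lt_top := by
    simp only [bern, Measure.add_apply, Measure.smul_apply, measure_univ, smul_eq_mul, mul_one]
    exact ENNReal.add_lt_top.mpr ⟨ENNReal.ofReal_lt_top, ENNReal.ofReal_lt_top⟩

/-- The random bipartite graph `B(t,p)` with parts `X = Y = Fin t`: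
each pair `(x, y)` is an edge independently with probability `p`. -/
noncomputable def bipMeasure (t : ℕ) (p : ℝ) : Measure (Fin t × Fin t → Bool) :=
  Measure.pi fun _ => bern p

lemma bern_false (p : ℝ) : bern p {false} = ENNReal.ofReal (1 - p) := by
  simp [bern, Measure.dirac_apply]

lemma bern_univ (p : ℝ) (h0 : 0 ≤ p) (h1 : p ≤ 1) : bern p Set.univ = 1 := by
  simp [bern, ← ENNReal.ofReal_add h0 (by linarith : (0:ℝ) ≤ 1 - p)]


lemma measure_A (t : ℕ) (p : ℝ) (h0 : 0 ≤ p) (h1 : p ≤ 1) (S T : Finset (Fin t)) :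
    bipMeasure t p {ω | ∀ i : Fin t × Fin t, i.1 ∈ S → i.2 ∉ T → ω i = false}
      = ENNReal.ofReal ((1-p) ^ (S.card * (t - T.card))) := by
  classical
  have hset : {ω : Fin t × Fin t → Bool | ∀ i, i.1 ∈ S → i.2 ∉ T → ω i = false}
      = Set.pi Set.univ (fun i => if i.1 ∈ S ∧ i.2 ∉ T then {false} else Set.univ) := by
    ext ω; simp only [Set.mem_setOf_eq, Set.mem_pi, Set.mem_univ, true_implies]
    constructor
    · intro h i; split_ifs with hc
      · exact h i hc.1 hc.2
      · trivial
    · intro h i hi1 hi2; have := h i; rw [if_pos ⟨hi1, hi2⟩] at this; exact this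
  rw [hset, bipMeasure, Measure.pi_pi]
  have hval : ∀ i : Fin t × Fin t,
      bern p (if i.1 ∈ S ∧ i.2 ∉ T then ({false} : Set Bool) else Set.univ)
      = if i.1 ∈ S ∧ i.2 ∉ T then ENNReal.ofReal (1-p) else 1 := by
    intro i; split_ifs
    · exact bern_false p
    · exact bern_univ p h0 h1
  rw [Finset.prod_congr rfl (fun i _ => hval i), ← Finset.prod_filter,
    Finset.prod_const]
  have hcard : (Finset.univ.filter (fun i : Fin t × Fin t => i.1 ∈ S ∧ i.2 ∉ T)).card
      = S.card * (t - T.card) := by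
    have : Finset.univ.filter (fun i : Fin t × Fin t => i.1 ∈ S ∧ i.2 ∉ T) = S ×ˢ Tᶜ := by
      ext i; simp [Finset.mem_compl]
    rw [this, Finset.card_product, Finset.card_compl, Fintype.card_fin]
  rw [hcard, ENNReal.ofReal_pow (by linarith)]

lemma compl_subset (t : ℕ) :
    {ω : Fin t × Fin t → Bool | ∃ σ : Equiv.Perm (Fin t), ∀ i, ω (i, σ i) = true}ᶜ ⊆
      ⋃ k ∈ Finset.Icc 1 t, ⋃ S ∈ Finset.powersetCard k (Finset.univ : Finset (Fin t)),
        ⋃ T ∈ Finset.powersetCard (k-1) (Finset.univ : Finset (Fin t)),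
          {ω | ∀ i : Fin t × Fin t, i.1 ∈ S → i.2 ∉ T → ω i = false} := by
  classical
  intro ω hω
  simp only [Set.mem_compl_iff, Set.mem_setOf_eq, not_exists] at hω
  set N : Fin t → Finset (Fin t) := fun x => Finset.univ.filter (fun y => ω (x,y) = true) with hN
  have hall : ¬ ∀ s : Finset (Fin t), s.card ≤ (s.biUnion N).card := by
    intro h
    obtain ⟨f, hfinj, hf⟩ := (Finset.all_card_le_biUnion_card_iff_exists_injective N).mp h
    have hbij : Function.Bijective f := Finite.injective_iff_bijective.mp hfinj
    exact hω (Equiv.ofBijective f hbij) (fun i => by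
      have := hf i; simp only [hN, Finset.mem_filter] at this
      exact this.2)
  push_neg at hall
  obtain ⟨S, hS⟩ := hall
  have hk1 : 1 ≤ S.card := by omega
  have hkt : S.card ≤ t := by
    simpa using Finset.card_le_univ S
  obtain ⟨T, hsub, -, hTcard⟩ := Finset.exists_subsuperset_card_eq
    (Finset.subset_univ (S.biUnion N)) (Nat.le_pred_of_lt hS)
    (by simp; omega)
  refine Set.mem_iUnion₂.mpr ⟨S.card, Finset.mem_Icc.mpr ⟨hk1, hkt⟩,
    Set.mem_iUnion₂.mpr ⟨S, Finset.mem_powersetCard.mpr ⟨Finset.subset_univ S, rfl⟩,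
    Set.mem_iUnion₂.mpr ⟨T, Finset.mem_powersetCard.mpr ⟨Finset.subset_univ T, hTcard.trans Nat.pred_eq_sub_one⟩, ?_⟩⟩⟩
  intro i hi1 hi2
  by_contra hfalse
  have htrue : ω i = true := by
    cases h : ω i
    · exact absurd h hfalse
    · rfl
  apply hi2
  apply hsub
  exact Finset.mem_biUnion.mpr ⟨i.1, hi1, by simp [hN, htrue]⟩

lemma key_nat (t k : ℕ) (hk1 : 1 ≤ k) (hkt : k ≤ t) :
    ∃ m : ℕ, 1 ≤ m ∧ t.choose k ≤ t ^ m ∧ t.choose (k-1) ≤ t ^ m ∧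
      (t+1) * m ≤ 2 * (k * (t - (k-1))) := by
  classical
  have ht1 : 1 ≤ t := hk1.trans hkt
  have hb : t - (k-1) = t + 1 - k := by omega
  rcases le_total k (t + 1 - k) with h | h
  · refine ⟨k, hk1, Nat.choose_le_pow _ _, (Nat.choose_le_pow _ _).trans
      (Nat.pow_le_pow_right ht1 (by omega)), ?_⟩
    rw [hb]
    calc (t+1) * k ≤ (2 * (t + 1 - k)) * k := by
          apply Nat.mul_le_mul_right; omega
      _ = 2 * (k * (t + 1 - k)) := by ring
  · refine ⟨t + 1 - k, by omega, ?_, ?_, ?_⟩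
    · rw [← Nat.choose_symm hkt]
      exact (Nat.choose_le_pow _ _).trans (Nat.pow_le_pow_right ht1 (by omega))
    · rw [← Nat.choose_symm (by omega : k - 1 ≤ t)]
      exact (Nat.choose_le_pow _ _).trans (Nat.pow_le_pow_right ht1 (by omega))
    · rw [hb]
      calc (t+1) * (t+1-k) ≤ (2 * k) * (t+1-k) := by
            apply Nat.mul_le_mul_right; omega
        _ = 2 * (k * (t + 1 - k)) := by ring

lemma key_real (t k : ℕ) (p : ℝ) (hp0 : 0 < p) (hp1 : p < 1) (hk1 : 1 ≤ k) (hkt : k ≤ t)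
    (ht : (t : ℝ) < Real.exp (p * t / 32)) :
    (t.choose k : ℝ) * (t.choose (k-1)) * (1-p) ^ (k * (t - (k-1)))
      ≤ Real.exp (-(1/32) * t * p) := by
  obtain ⟨m, hm1, hc1, hc2, hmt⟩ := key_nat t k hk1 hkt
  have ht1 : 1 ≤ t := hk1.trans hkt
  set N := k * (t - (k-1)) with hNdef
  have h1p : (0:ℝ) ≤ 1 - p := by linarith
  -- (1-p)^N ≤ exp (-p * N)
  have e1 : (1-p) ^ N ≤ Real.exp (-(p * N)) := by
    calc (1-p) ^ N ≤ (Real.exp (-p)) ^ N :=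
          pow_le_pow_left₀ h1p (by linarith [Real.add_one_le_exp (-p)]) N
      _ = Real.exp (-(p * N)) := by rw [← Real.exp_nat_mul]; ring_nf
  -- t^m ≤ exp (p*t*m/32)
  have e2 : (t:ℝ) ^ m ≤ Real.exp (p * t * m / 32) := by
    calc (t:ℝ) ^ m ≤ (Real.exp (p * t / 32)) ^ m :=
          pow_le_pow_left₀ (by positivity) ht.le m
      _ = Real.exp (p * t * m / 32) := by rw [← Real.exp_nat_mul]; ring_nf
  have hc1' : (t.choose k : ℝ) ≤ (t:ℝ) ^ m := by exact_mod_cast hc1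
  have hc2' : (t.choose (k-1) : ℝ) ≤ (t:ℝ) ^ m := by exact_mod_cast hc2
  have hcpos : (0:ℝ) ≤ (t:ℝ)^m := by positivity
  have step : (t.choose k : ℝ) * (t.choose (k-1)) * (1-p) ^ N
      ≤ Real.exp (p * t * m / 32) * Real.exp (p * t * m / 32) * Real.exp (-(p * N)) := by
    have hexp0 : (0:ℝ) ≤ Real.exp (p*t*m/32) := (Real.exp_pos _).le
    apply mul_le_mul
    · apply mul_le_mul (hc1'.trans e2) (hc2'.trans e2) (Nat.cast_nonneg _) hexp0
    · exact e1
    · positivity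
    · positivity
  rw [← Real.exp_add, ← Real.exp_add] at step
  refine step.trans (Real.exp_le_exp.mpr ?_)
  -- need: p*t*m/32 + p*t*m/32 - p*N ≤ -(1/32)*t*p
  have hmt' : ((t:ℝ)+1) * m ≤ 2 * N := by exact_mod_cast hmt
  have hm1' : (1:ℝ) ≤ m := by exact_mod_cast hm1
  have ht1' : (1:ℝ) ≤ t := by exact_mod_cast ht1
  nlinarith [mul_pos hp0 (by nlinarith : (0:ℝ) < (t:ℝ)*m - t*m/8 - t/16)]

/-- There are universal constants `γ > 0` and `C` such that `B(t,p)` contains a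
perfect matching with probability at least `1 - C·t·exp(-γ·t·p)`. -/
theorem bip_perfect_matching :
    ∃ γ : ℝ, 0 < γ ∧ ∃ C : ℝ, ∀ (t : ℕ) (p : ℝ), 0 < p → p < 1 →
      1 - ENNReal.ofReal (C * t * Real.exp (-γ * t * p)) ≤
        bipMeasure t p {ω | ∃ σ : Equiv.Perm (Fin t), ∀ i : Fin t, ω (i, σ i) = true} := by
  classical
  refine ⟨1/32, by norm_num, 1, fun t p hp0 hp1 => ?_⟩
  haveI : IsProbabilityMeasure (bern p) := ⟨bern_univ p hp0.le hp1.le⟩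
  haveI : IsProbabilityMeasure (bipMeasure t p) := by
    unfold bipMeasure; infer_instance
  set M : Set (Fin t × Fin t → Bool) :=
    {ω | ∃ σ : Equiv.Perm (Fin t), ∀ i : Fin t, ω (i, σ i) = true} with hM
  rcases Nat.eq_zero_or_pos t with ht0 | ht1
  · subst ht0
    have : M = Set.univ := by
      ext ω; simp only [hM, Set.mem_setOf_eq, Set.mem_univ, iff_true]
      exact ⟨Equiv.refl _, fun i => i.elim0⟩
    rw [this, measure_univ]
    exact tsub_le_self
  rcases le_or_gt 1 ((1:ℝ) * t * Real.exp (-(1/32) * t * p)) with hbig | hsmall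
  · have : (1:ℝ≥0∞) ≤ ENNReal.ofReal (1 * t * Real.exp (-(1/32) * t * p)) :=
      ENNReal.one_le_ofReal.mpr hbig
    rw [tsub_eq_zero_of_le this]
    exact zero_le
  · -- nontrivial case : t < exp (p*t/32)
    have hexp : (t:ℝ) < Real.exp (p * t / 32) := by
      have h1 : (0:ℝ) < Real.exp (-(1/32) * t * p) := Real.exp_pos _
      have := hsmall
      rw [one_mul] at this
      have h2 : (t:ℝ) < 1 / Real.exp (-(1/32) * t * p) := by
        rw [lt_div_iff₀ h1]; exact this
      calc (t:ℝ) < 1 / Real.exp (-(1/32) * t * p) := h2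
        _ = Real.exp (p * t / 32) := by
            rw [one_div, ← Real.exp_neg]; ring_nf
    set U : Set (Fin t × Fin t → Bool) :=
      ⋃ k ∈ Finset.Icc 1 t, ⋃ S ∈ Finset.powersetCard k (Finset.univ : Finset (Fin t)),
        ⋃ T ∈ Finset.powersetCard (k-1) (Finset.univ : Finset (Fin t)),
          {ω | ∀ i : Fin t × Fin t, i.1 ∈ S → i.2 ∉ T → ω i = false} with hU
    have hcover : (Set.univ : Set (Fin t × Fin t → Bool)) ⊆ M ∪ U := by
      intro ω _
      by_cases h : ω ∈ M
      · exact Or.inl h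
      · exact Or.inr (compl_subset t h)
    have hμU : bipMeasure t p U ≤
        ENNReal.ofReal (1 * t * Real.exp (-(1/32) * t * p)) := by
      calc bipMeasure t p U
          ≤ ∑ k ∈ Finset.Icc 1 t, bipMeasure t p
            (⋃ S ∈ Finset.powersetCard k (Finset.univ : Finset (Fin t)),
              ⋃ T ∈ Finset.powersetCard (k-1) (Finset.univ : Finset (Fin t)),
                {ω | ∀ i : Fin t × Fin t, i.1 ∈ S → i.2 ∉ T → ω i = false}) :=
            measure_biUnion_finset_le _ _
        _ ≤ ∑ k ∈ Finset.Icc 1 t, ENNReal.ofReal (Real.exp (-(1/32) * t * p)) := by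
            apply Finset.sum_le_sum
            intro k hk
            rw [Finset.mem_Icc] at hk
            calc bipMeasure t p _
                ≤ ∑ S ∈ Finset.powersetCard k (Finset.univ : Finset (Fin t)),
                    bipMeasure t p
                    (⋃ T ∈ Finset.powersetCard (k-1) (Finset.univ : Finset (Fin t)),
                      {ω | ∀ i : Fin t × Fin t, i.1 ∈ S → i.2 ∉ T → ω i = false}) :=
                  measure_biUnion_finset_le _ _
              _ ≤ ∑ S ∈ Finset.powersetCard k (Finset.univ : Finset (Fin t)),
                    ∑ T ∈ Finset.powersetCard (k-1) (Finset.univ : Finset (Fin t)),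
                      bipMeasure t p
                      {ω | ∀ i : Fin t × Fin t, i.1 ∈ S → i.2 ∉ T → ω i = false} :=
                  Finset.sum_le_sum (fun S _ => measure_biUnion_finset_le _ _)
              _ = ∑ S ∈ Finset.powersetCard k (Finset.univ : Finset (Fin t)),
                    ∑ T ∈ Finset.powersetCard (k-1) (Finset.univ : Finset (Fin t)),
                      ENNReal.ofReal ((1-p) ^ (k * (t - (k-1)))) := by
                  apply Finset.sum_congr rfl
                  intro S hS
                  apply Finset.sum_congr rfl
                  intro T hT
                  rw [measure_A t p hp0.le hp1.le S T,
                    (Finset.mem_powersetCard.mp hS).2, (Finset.mem_powersetCard.mp hT).2]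
              _ = (t.choose k) * ((t.choose (k-1)) *
                    ENNReal.ofReal ((1-p) ^ (k * (t - (k-1))))) := by
                  rw [Finset.sum_const, Finset.sum_const, Finset.card_powersetCard,
                    Finset.card_powersetCard, Finset.card_univ, Fintype.card_fin,
                    nsmul_eq_mul, nsmul_eq_mul]
              _ ≤ ENNReal.ofReal (Real.exp (-(1/32) * t * p)) := by
                  rw [← ENNReal.ofReal_natCast (t.choose k),
                    ← ENNReal.ofReal_natCast (t.choose (k-1)),
                    ← ENNReal.ofReal_mul (Nat.cast_nonneg _),
                    ← ENNReal.ofReal_mul (Nat.cast_nonneg _)]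
                  apply ENNReal.ofReal_le_ofReal
                  rw [← mul_assoc]
                  exact key_real t k p hp0 hp1 hk.1 hk.2 hexp
        _ = (t + 1 - 1) • ENNReal.ofReal (Real.exp (-(1/32) * t * p)) := by
            rw [Finset.sum_const, Nat.card_Icc]
        _ = ENNReal.ofReal (1 * t * Real.exp (-(1/32) * t * p)) := by
            have : t + 1 - 1 = t := by omega
            rw [this, nsmul_eq_mul, ← ENNReal.ofReal_natCast t,
              ← ENNReal.ofReal_mul (Nat.cast_nonneg _)]
            ring_nf
    rw [tsub_le_iff_right]
    calc (1:ℝ≥0∞) = bipMeasure t p Set.univ := measure_univ.symm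
      _ ≤ bipMeasure t p (M ∪ U) := measure_mono hcover
      _ ≤ bipMeasure t p M + bipMeasure t p U := measure_union_le _ _
      _ ≤ bipMeasure t p M + ENNReal.ofReal (1 * t * Real.exp (-(1/32) * t * p)) := by
          exact add_le_add_right hμU _
end
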